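/- Let a > 0 and c > 0. The sequence p(n) = (c^a e^(−c)/γ(a,c)) · c^n / (a(a+1)⋯(a+n)) for n ≥ 0 defines a probability distribution on the nonnegative integers, i.e., p(n) ≥ 0 for all n and Σ_{n=0}^∞ p(n) = 1. -/

import Mathlib

open Real

/-- The lower incomplete Gamma function `γ(a, z) = ∫₀^z t^(a-1) e^(-t) dt`. -/
noncomputable def lowerGamma (a z : ℝ) : ℝ := ∫ t in (0:ℝ)..z, t ^ (a - 1) * Real.exp (-t)

lemma lowerGamma_eq_partial (a c : ℝ) (hc : 0 ≤ c) :
    (lowerGamma a c : ℂ) = Complex.partialGamma a c := by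
  rw [lowerGamma, Complex.partialGamma, ← intervalIntegral.integral_ofReal]
  refine intervalIntegral.integral_congr (fun x hx => ?_)
  rw [Set.uIcc_of_le hc] at hx
  have hx0 : 0 ≤ x := hx.1
  push_cast
  rw [Complex.ofReal_cpow hx0]
  push_cast
  ring

lemma lowerGamma_rec (a c : ℝ) (ha : 0 < a) (hc : 0 ≤ c) :
    lowerGamma (a + 1) c = a * lowerGamma a c - Real.exp (-c) * c ^ a := by
  have h := Complex.partialGamma_add_one (s := (a:ℂ)) (by simpa using ha) hc
  have e1 : ((a:ℂ) + 1) = ((a + 1 : ℝ) : ℂ) := by push_cast; ring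
  rw [e1, ← lowerGamma_eq_partial _ _ hc, ← lowerGamma_eq_partial _ _ hc,
    ← Complex.ofReal_cpow hc] at h
  exact_mod_cast h

lemma stmt5_prod_pos (a : ℝ) (ha : 0 < a) (N : ℕ) : 0 < ∏ m ∈ Finset.range N, (a + m) :=
  Finset.prod_pos (fun m _ => by positivity)

lemma stmt5_key_identity (a c : ℝ) (ha : 0 < a) (hc : 0 ≤ c) (N : ℕ) :
    lowerGamma a c =
      Real.exp (-c) * (∑ n ∈ Finset.range N, c ^ (a + n) / ∏ m ∈ Finset.range (n + 1), (a + m))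
      + lowerGamma (a + N) c / ∏ m ∈ Finset.range N, (a + m) := by
  induction N with
  | zero => simp
  | succ N ih =>
    have haN : (0:ℝ) < a + N := by positivity
    have hrec := lowerGamma_rec (a + N) c haN hc
    have e1 : a + (N:ℝ) + 1 = a + ((N+1 : ℕ) : ℝ) := by push_cast; ring
    rw [e1] at hrec
    have hg : lowerGamma (a + ((N+1:ℕ):ℝ)) c
        = (a + N) * lowerGamma (a + N) c - Real.exp (-c) * c ^ (a + N) := hrec
    have hP := stmt5_prod_pos a ha N
    have hP1 := stmt5_prod_pos a ha (N + 1)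
    rw [ih]
    rw [Finset.sum_range_succ, Finset.prod_range_succ, hg]
    field_simp
    ring

lemma lowerGamma_intervalIntegrable {b c : ℝ} (hb : 0 < b) (hc : 0 ≤ c) :
    IntervalIntegrable (fun t : ℝ => t ^ (b - 1) * Real.exp (-t)) MeasureTheory.volume 0 c := by
  rw [intervalIntegrable_iff_integrableOn_Ioc_of_le hc]
  exact (((Real.GammaIntegral_convergent hb).mono_set Set.Ioc_subset_Ioi_self).congr_fun
    (fun x _ => mul_comm _ _) measurableSet_Ioc)

lemma lowerGamma_nonneg {b c : ℝ} (hc : 0 ≤ c) : 0 ≤ lowerGamma b c := by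
  refine intervalIntegral.integral_nonneg hc (fun x hx => ?_)
  have := hx.1
  positivity

lemma lowerGamma_pos {b c : ℝ} (hb : 0 < b) (hc : 0 < c) : 0 < lowerGamma b c := by
  refine intervalIntegral.intervalIntegral_pos_of_pos_on
    (lowerGamma_intervalIntegrable hb hc.le) (fun x hx => ?_) hc
  have := hx.1; positivity

lemma lowerGamma_le {b c : ℝ} (hb : 0 < b) (hc : 0 ≤ c) :
    lowerGamma b c ≤ c ^ b / b := by
  have h1 : lowerGamma b c ≤ ∫ t in (0:ℝ)..c, t ^ (b - 1) := by
    refine intervalIntegral.integral_mono_on hc (lowerGamma_intervalIntegrable hb hc)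
      (intervalIntegral.intervalIntegrable_rpow' (by linarith)) (fun x hx => ?_)
    have hx0 : 0 ≤ x := hx.1
    have : Real.exp (-x) ≤ 1 := Real.exp_le_one_iff.mpr (by linarith)
    calc x ^ (b-1) * Real.exp (-x) ≤ x ^ (b-1) * 1 :=
          mul_le_mul_of_nonneg_left this (by positivity)
      _ = x ^ (b-1) := mul_one _
  rw [integral_rpow (Or.inl (by linarith))] at h1
  rw [sub_add_cancel, Real.zero_rpow hb.ne', sub_zero] at h1
  exact h1

lemma stmt5_summable_u (a c : ℝ) (ha : 0 < a) (hc : 0 < c) :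
    Summable (fun n : ℕ => c ^ n / ∏ m ∈ Finset.range (n + 1), (a + m)) := by
  set u := fun n : ℕ => c ^ n / ∏ m ∈ Finset.range (n + 1), (a + m) with hu
  refine summable_of_ratio_norm_eventually_le (r := 1/2) (by norm_num) ?_
  filter_upwards [Filter.eventually_ge_atTop ⌈2*c⌉₊] with n hn
  have hn' : 2 * c ≤ (n:ℝ) := le_trans (Nat.le_ceil _) (by exact_mod_cast hn)
  have hP := stmt5_prod_pos a ha (n+1)
  have hP2 := stmt5_prod_pos a ha (n+2)
  have hupos : 0 < u n := by simp only [hu]; positivity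
  have hstep : u (n+1) = u n * (c / (a + (n+1))) := by
    simp only [hu, Finset.prod_range_succ]
    field_simp
    push_cast; ring
  rw [Real.norm_eq_abs, Real.norm_eq_abs, abs_of_pos (by rw [hstep]; positivity),
    abs_of_pos hupos, hstep, mul_comm]
  have : c / (a + (n+1)) ≤ 1/2 := by
    rw [div_le_div_iff₀ (by positivity) (by norm_num)]
    linarith
  exact mul_le_mul_of_nonneg_right this hupos.le

/-- For `a > 0`, `c > 0`, the sequence
`p(n) = (c^a e^(−c)/γ(a,c)) · c^n / (a(a+1)⋯(a+n))` is a probability distribution on ℕ. -/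
theorem stmt5 (a c : ℝ) (ha : 0 < a) (hc : 0 < c) :
    let p : ℕ → ℝ := fun n =>
      (c ^ a * Real.exp (-c) / lowerGamma a c) * c ^ n / ∏ m ∈ Finset.range (n + 1), (a + m)
    (∀ n, 0 ≤ p n) ∧ ∑' n, p n = 1 := by
  intro p
  have hγ : 0 < lowerGamma a c := lowerGamma_pos ha hc
  set u := fun n : ℕ => c ^ n / ∏ m ∈ Finset.range (n + 1), (a + m) with hu
  have hupos : ∀ n, 0 < u n := fun n => by
    have := stmt5_prod_pos a ha (n+1); simp only [hu]; positivity
  have hSu : Summable u := stmt5_summable_u a c ha hc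
  set f := fun n : ℕ => (Real.exp (-c) * c ^ a) * u n with hf
  have hSf : Summable f := hSu.mul_left _
  have hfe : ∀ n : ℕ, f n = Real.exp (-c) * (c ^ (a + (n:ℝ)) / ∏ m ∈ Finset.range (n+1), (a + m)) := by
    intro n
    simp only [hf, hu]
    rw [Real.rpow_add hc, Real.rpow_natCast]
    ring
  -- remainder tends to zero
  have hR : Filter.Tendsto (fun N : ℕ => lowerGamma (a + N) c / ∏ m ∈ Finset.range N, (a + m))
      Filter.atTop (nhds 0) := by
    have h0 : Filter.Tendsto (fun N : ℕ => c ^ a * u N) Filter.atTop (nhds 0) := by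
      simpa using (hSu.tendsto_atTop_zero.const_mul (c ^ a))
    refine squeeze_zero (fun N => ?_) (fun N => ?_) h0
    · exact div_nonneg (lowerGamma_nonneg hc.le) (stmt5_prod_pos a ha N).le
    · have haN : (0:ℝ) < a + N := by positivity
      have hP := stmt5_prod_pos a ha N
      have hP1 := stmt5_prod_pos a ha (N+1)
      have hle := lowerGamma_le haN hc.le
      have key : c ^ a * u N = c ^ (a + (N:ℝ)) / (a + N) / ∏ m ∈ Finset.range N, (a + m) := by
        simp only [hu, Finset.prod_range_succ]
        rw [Real.rpow_add hc, Real.rpow_natCast]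
        field_simp
      rw [key]
      gcongr
  -- partial sums tend to γ
  have hpartial : ∀ N : ℕ, ∑ n ∈ Finset.range N, f n
      = lowerGamma a c - lowerGamma (a + N) c / ∏ m ∈ Finset.range N, (a + m) := by
    intro N
    have := stmt5_key_identity a c ha hc.le N
    rw [Finset.mul_sum] at this
    have : lowerGamma a c - lowerGamma (a + N) c / ∏ m ∈ Finset.range N, (a + m)
        = ∑ n ∈ Finset.range N,
            Real.exp (-c) * (c ^ (a + (n:ℝ)) / ∏ m ∈ Finset.range (n+1), (a + m)) := by
      rw [← Finset.mul_sum]; linarith [stmt5_key_identity a c ha hc.le N]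
    rw [this]
    exact Finset.sum_congr rfl (fun n _ => hfe n)
  have hTend : Filter.Tendsto (fun N : ℕ => ∑ n ∈ Finset.range N, f n)
      Filter.atTop (nhds (lowerGamma a c)) := by
    simp only [hpartial]
    simpa using (tendsto_const_nhds.sub hR)
  have hHasSum : HasSum f (lowerGamma a c) :=
    (Summable.hasSum_iff_tendsto_nat hSf).mpr hTend
  have htsumf : ∑' n, f n = lowerGamma a c := hHasSum.tsum_eq
  constructor
  · intro n
    have hP := stmt5_prod_pos a ha (n+1)
    have h1 : (0:ℝ) ≤ c ^ a * Real.exp (-c) / lowerGamma a c := by positivity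
    exact div_nonneg (mul_nonneg h1 (by positivity)) hP.le
  · have hpe : p = fun n => (lowerGamma a c)⁻¹ * f n := by
      funext n
      have hP := (stmt5_prod_pos a ha (n+1)).ne'
      simp only [p, hf, hu]
      field_simp
    rw [hpe, tsum_mul_left, htsumf, inv_mul_cancel₀ hγ.ne']
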